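/- Define sequences l₁⁽⁰⁾ = 0, l₂⁽⁰⁾ = L, l₁⁽ⁿ⁺¹⁾ = L((1+l₁⁽ⁿ⁾)/(1+θ+l₁⁽ⁿ⁾+l₂⁽ⁿ⁾))², l₂⁽ⁿ⁺¹⁾ = L((1+l₂⁽ⁿ⁾)/(1+θ+l₁⁽ⁿ⁾+l₂⁽ⁿ⁾))². Then (l₁⁽ⁿ⁾) is strictly increasing and bounded above by L, and (l₂⁽ⁿ⁾) is strictly decreasing and bounded below by 0; both sequences converge, and the pair of limits (l̂₁, l̂₂) is a fixed point of W. -/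

import Mathlib

noncomputable def Wmap (θ L : ℝ) (p : ℝ × ℝ) : ℝ × ℝ :=
  (L * ((1 + p.1) / (1 + θ + p.1 + p.2)) ^ 2,
   L * ((1 + p.2) / (1 + θ + p.1 + p.2)) ^ 2)

/-- The sequence `ℓₙ = Wⁿ(0, L)`. -/
noncomputable def ellSeq (θ L : ℝ) (n : ℕ) : ℝ × ℝ := (Wmap θ L)^[n] (0, L)

lemma ellSeq_succ (θ L : ℝ) (n : ℕ) :
    ellSeq θ L (n + 1) = Wmap θ L (ellSeq θ L n) := by
  simp [ellSeq, Function.iterate_succ_apply']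

lemma ratio_pos {θ a b : ℝ} (hθ : 0 < θ) (ha : 0 ≤ a) (hb : 0 ≤ b) :
    0 < (1 + a) / (1 + θ + a + b) := by positivity

lemma ratio_lt_one {θ a b : ℝ} (hθ : 0 < θ) (ha : 0 ≤ a) (hb : 0 ≤ b) :
    (1 + a) / (1 + θ + a + b) < 1 := by
  rw [div_lt_one (by linarith)]; linarith

lemma ratio_lt {θ a a' b b' : ℝ} (hθ : 0 < θ) (ha : 0 ≤ a) (haa : a ≤ a')
    (hb' : 0 ≤ b') (hbb : b' < b) :
    (1 + a) / (1 + θ + a + b) < (1 + a') / (1 + θ + a' + b') := by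
  rw [div_lt_div_iff₀ (by linarith) (by linarith)]
  nlinarith

theorem ell_sequence_converges_to_fixed_point (θ L : ℝ) (hθ : 0 < θ) (hL : 0 < L) :
    StrictMono (fun n => (ellSeq θ L n).1) ∧ (∀ n, (ellSeq θ L n).1 < L) ∧
    StrictAnti (fun n => (ellSeq θ L n).2) ∧ (∀ n, 0 < (ellSeq θ L n).2) ∧
    ∃ l : ℝ × ℝ, Filter.Tendsto (ellSeq θ L) Filter.atTop (nhds l) ∧ Wmap θ L l = l := by
  set x : ℕ → ℝ := fun n => (ellSeq θ L n).1 with hx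
  set y : ℕ → ℝ := fun n => (ellSeq θ L n).2 with hy
  have hx0 : x 0 = 0 := rfl
  have hy0 : y 0 = L := rfl
  have hxs : ∀ n, x (n + 1) = L * ((1 + x n) / (1 + θ + x n + y n)) ^ 2 := by
    intro n; simp only [hx, hy, ellSeq_succ, Wmap]
  have hys : ∀ n, y (n + 1) = L * ((1 + y n) / (1 + θ + x n + y n)) ^ 2 := by
    intro n; simp only [hx, hy, ellSeq_succ, Wmap]
  -- key induction
  have key : ∀ n, 0 ≤ x n ∧ 0 ≤ y n ∧ x n < x (n + 1) ∧ y (n + 1) < y n := by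
    intro n
    induction n with
    | zero =>
      refine ⟨le_refl _, hL.le, ?_, ?_⟩
      · rw [hx0, hxs 0, hx0, hy0]
        have := ratio_pos (a := (0:ℝ)) (b := L) hθ le_rfl hL.le
        positivity
      · rw [hy0, hys 0, hx0, hy0]
        have h1 := ratio_lt_one (a := L) (b := (0:ℝ)) hθ hL.le le_rfl
        have h0 := ratio_pos (a := L) (b := (0:ℝ)) hθ hL.le le_rfl
        calc L * ((1 + L) / (1 + θ + 0 + L)) ^ 2
            < L * 1 ^ 2 := by
              apply mul_lt_mul_of_pos_left _ hL
              have : (1 + L) / (1 + θ + 0 + L) = (1 + L) / (1 + θ + L + 0) := by ring_nf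
              rw [this]
              exact pow_lt_pow_left₀ h1 h0.le (by norm_num)
          _ = L := by ring
    | succ n ih =>
      obtain ⟨hxn, hyn, hxlt, hylt⟩ := ih
      have hxn1 : 0 ≤ x (n + 1) := le_of_lt (lt_of_le_of_lt hxn hxlt)
      have hyn1 : 0 ≤ y (n + 1) := by
        rw [hys n]
        have := ratio_pos (a := y n) (b := x n) hθ hyn hxn
        have heq : (1 + y n) / (1 + θ + x n + y n) = (1 + y n) / (1 + θ + y n + x n) := by
          ring_nf
        rw [heq]; positivity
      refine ⟨hxn1, hyn1, ?_, ?_⟩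
      · rw [hxs n, hxs (n + 1)]
        apply mul_lt_mul_of_pos_left _ hL
        apply pow_lt_pow_left₀ _ (by positivity) (by norm_num)
        exact ratio_lt hθ hxn hxlt.le hyn1 hylt
      · rw [hys n, hys (n + 1)]
        apply mul_lt_mul_of_pos_left _ hL
        have h1 : (1 + y (n+1)) / (1 + θ + x (n+1) + y (n+1))
            < (1 + y n) / (1 + θ + x n + y n) := by
          have e1 : (1 + θ + x (n+1) + y (n+1)) = (1 + θ + y (n+1) + x (n+1)) := by ring
          have e2 : (1 + θ + x n + y n) = (1 + θ + y n + x n) := by ring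
          rw [e1, e2]
          exact ratio_lt hθ hyn1 hylt.le hxn hxlt
        apply pow_lt_pow_left₀ h1 _ (by norm_num)
        have e1 : (1 + θ + x (n+1) + y (n+1)) = (1 + θ + y (n+1) + x (n+1)) := by ring
        rw [e1]
        exact (ratio_pos hθ hyn1 hxn1).le
  have hxnn : ∀ n, 0 ≤ x n := fun n => (key n).1
  have hynn : ∀ n, 0 ≤ y n := fun n => (key n).2.1
  have hmono : StrictMono x := strictMono_nat_of_lt_succ fun n => (key n).2.2.1
  have hanti : StrictAnti y := strictAnti_nat_of_succ_lt fun n => (key n).2.2.2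
  have hxL : ∀ n, x n < L := by
    intro n
    cases n with
    | zero => rw [hx0]; exact hL
    | succ n =>
      rw [hxs n]
      have h1 := ratio_lt_one (a := x n) (b := y n) hθ (hxnn n) (hynn n)
      have h0 := ratio_pos (a := x n) (b := y n) hθ (hxnn n) (hynn n)
      calc L * ((1 + x n) / (1 + θ + x n + y n)) ^ 2
          < L * 1 ^ 2 := by
            exact mul_lt_mul_of_pos_left (pow_lt_pow_left₀ h1 h0.le (by norm_num)) hL
        _ = L := by ring
  have hy0' : ∀ n, 0 < y n := by
    intro n
    cases n with
    | zero => rw [hy0]; exact hL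
    | succ n =>
      rw [hys n]
      have := ratio_pos (a := y n) (b := x n) hθ (hynn n) (hxnn n)
      have heq : (1 + y n) / (1 + θ + x n + y n) = (1 + y n) / (1 + θ + y n + x n) := by
        ring_nf
      rw [heq]; positivity
  refine ⟨hmono, hxL, hanti, hy0', ?_⟩
  -- convergence
  have hbddx : BddAbove (Set.range x) := ⟨L, by rintro _ ⟨n, rfl⟩; exact (hxL n).le⟩
  have hbddy : BddBelow (Set.range y) := ⟨0, by rintro _ ⟨n, rfl⟩; exact (hynn n)⟩
  have htx : Filter.Tendsto x Filter.atTop (nhds (⨆ n, x n)) :=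
    tendsto_atTop_ciSup hmono.monotone hbddx
  have hty : Filter.Tendsto y Filter.atTop (nhds (⨅ n, y n)) :=
    tendsto_atTop_ciInf hanti.antitone hbddy
  set a := ⨆ n, x n
  set b := ⨅ n, y n
  have hT : Filter.Tendsto (ellSeq θ L) Filter.atTop (nhds (a, b)) := by
    have := htx.prodMk_nhds hty
    simpa using this
  refine ⟨(a, b), hT, ?_⟩
  have ha : 0 ≤ a := le_of_tendsto_of_tendsto' tendsto_const_nhds htx fun n => hxnn n
  have hb : 0 ≤ b := le_of_tendsto_of_tendsto' tendsto_const_nhds hty fun n => hynn n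
  have hne : (1 + θ + a + b) ≠ 0 := by positivity
  have hd : ContinuousAt (fun p : ℝ × ℝ => 1 + θ + p.1 + p.2) (a, b) := by fun_prop
  have hn1 : ContinuousAt (fun p : ℝ × ℝ => 1 + p.1) (a, b) := by fun_prop
  have hn2 : ContinuousAt (fun p : ℝ × ℝ => 1 + p.2) (a, b) := by fun_prop
  have hcont : ContinuousAt (Wmap θ L) (a, b) := by
    apply ContinuousAt.prodMk
    · exact continuousAt_const.mul ((hn1.div hd hne).pow 2)
    · exact continuousAt_const.mul ((hn2.div hd hne).pow 2)
  have h1 : Filter.Tendsto (fun n => ellSeq θ L (n + 1)) Filter.atTop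
      (nhds (Wmap θ L (a, b))) := by
    have := hcont.tendsto.comp hT
    simpa [Function.comp_def, ellSeq_succ] using this
  have h2 : Filter.Tendsto (fun n => ellSeq θ L (n + 1)) Filter.atTop (nhds (a, b)) :=
    hT.comp (Filter.tendsto_add_atTop_nat 1)
  exact tendsto_nhds_unique h1 h2
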